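/- Let g : ℝᵈ → [0,∞) satisfy: (I) g(r) = 0 whenever |r| ≤ D for some D > 0, and (II) g(r) − 1 ≤ ψ(|r|) for a nonnegative decreasing function ψ on [D,∞) with Σ_{k≥1} kᵈ⁻¹ψ(kD) < ∞ (equivalently ∫₀^∞ t^{d−1}ψ(t)dt < ∞). Then there is a finite constant b ≥ 1 such that for all n and all points x₀,…,x_n with Π_{i<j} g(x_i − x_j) > 0, one has Π_{i=1}^n g(x₀ − x_i) ≤ b. -/
import Mathlib
open MeasureTheory Metric
open scoped ENNReal

lemma pow_sub_pow_le_aux {a b : ℝ} (d : ℕ) (hb : 0 ≤ b) (hba : b ≤ a) :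
    a ^ d - b ^ d ≤ d * (a - b) * a ^ (d - 1) := by
  rcases Nat.eq_zero_or_pos d with rfl | hd
  · simp
  have ha : 0 ≤ a := hb.trans hba
  rw [← geom_sum₂_mul a b d]
  have hsum : (∑ i ∈ Finset.range d, a ^ i * b ^ (d - 1 - i)) ≤ d * a ^ (d - 1) := by
    calc (∑ i ∈ Finset.range d, a ^ i * b ^ (d - 1 - i))
        ≤ ∑ _i ∈ Finset.range d, a ^ (d - 1) := by
          refine Finset.sum_le_sum fun i hi => ?_
          have hi' : i ≤ d - 1 := Nat.le_sub_one_of_lt (Finset.mem_range.mp hi)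
          calc a ^ i * b ^ (d - 1 - i) ≤ a ^ i * a ^ (d - 1 - i) :=
                mul_le_mul_of_nonneg_left (pow_le_pow_left₀ hb hba _) (pow_nonneg ha _)
            _ = a ^ (d - 1) := by rw [← pow_add]; congr 1; omega
      _ = d * a ^ (d - 1) := by rw [Finset.sum_const, Finset.card_range, nsmul_eq_mul]
  calc (∑ i ∈ Finset.range d, a ^ i * b ^ (d - 1 - i)) * (a - b)
      ≤ (d * a ^ (d - 1)) * (a - b) :=
        mul_le_mul_of_nonneg_right hsum (sub_nonneg.mpr hba)
    _ = d * (a - b) * a ^ (d - 1) := by ring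

lemma packing_count {d : ℕ} (D : ℝ) (hD : 0 < D) (x₀ : EuclideanSpace ℝ (Fin d))
    (s : Finset (EuclideanSpace ℝ (Fin d)))
    (hpair : ∀ y ∈ s, ∀ z ∈ s, y ≠ z → D < ‖y - z‖)
    (ρ R : ℝ) (hρ : D ≤ ρ) (hρR : ρ ≤ R)
    (hmem : ∀ y ∈ s, ρ ≤ ‖y - x₀‖ ∧ ‖y - x₀‖ < R) :
    (s.card : ℝ) * (D / 2) ^ d + (ρ - D / 2) ^ d ≤ (R + D / 2) ^ d := by
  have hr : 0 < D / 2 := by linarith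
  have hρr : 0 < ρ - D / 2 := by linarith
  have hRr : 0 < R + D / 2 := by linarith
  set ν := volume (ball (0 : EuclideanSpace ℝ (Fin d)) 1) with hν_def
  have hν0 : ν ≠ 0 := (measure_ball_pos _ _ one_pos).ne'
  have hνt : ν ≠ ⊤ := measure_ball_lt_top.ne
  have hvol : ∀ (y : EuclideanSpace ℝ (Fin d)) (t : ℝ), 0 < t → volume (ball y t) = ENNReal.ofReal (t ^ d) * ν := by
    intro y t ht
    rw [Measure.addHaar_ball_of_pos volume y ht, finrank_euclideanSpace_fin]
  have hdisj : (↑s : Set (EuclideanSpace ℝ (Fin d))).PairwiseDisjoint (fun y => ball y (D / 2)) := by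
    intro y hy z hz hyz
    apply ball_disjoint_ball
    have := hpair y hy z hz hyz
    rw [dist_eq_norm]; linarith
  have hUsub : (⋃ y ∈ s, ball y (D / 2)) ⊆ ball x₀ (R + D / 2) \ ball x₀ (ρ - D / 2) := by
    intro z hz
    simp only [Set.mem_iUnion, exists_prop] at hz
    obtain ⟨y, hy, hzy⟩ := hz
    obtain ⟨h1, h2⟩ := hmem y hy
    rw [mem_ball, dist_eq_norm] at hzy
    have tri1 : ‖z - x₀‖ ≤ ‖z - y‖ + ‖y - x₀‖ := by
      simpa using norm_add_le (z - y) (y - x₀)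
    have tri2 : ‖y - x₀‖ ≤ ‖y - z‖ + ‖z - x₀‖ := by
      simpa using norm_add_le (y - z) (z - x₀)
    have hrev : ‖y - z‖ = ‖z - y‖ := norm_sub_rev _ _
    constructor
    · rw [mem_ball, dist_eq_norm]; linarith
    · intro hz'
      rw [mem_ball, dist_eq_norm] at hz'
      linarith
  -- measure of the union
  have hmeasU : volume (⋃ y ∈ s, ball y (D / 2))
      = (s.card : ℝ≥0∞) * (ENNReal.ofReal ((D / 2) ^ d) * ν) := by
    rw [measure_biUnion_finset hdisj (fun y _ => measurableSet_ball)]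
    rw [Finset.sum_congr rfl fun y _ => hvol y (D / 2) hr]
    rw [Finset.sum_const, nsmul_eq_mul]
  -- the union is disjoint from the small ball and both inside the big ball
  have hkey : ((s.card : ℝ≥0∞) * ENNReal.ofReal ((D / 2) ^ d)
      + ENNReal.ofReal ((ρ - D / 2) ^ d)) * ν ≤ ENNReal.ofReal ((R + D / 2) ^ d) * ν := by
    have hdisj2 : Disjoint (⋃ y ∈ s, ball y (D / 2)) (ball x₀ (ρ - D / 2)) :=
      Set.disjoint_of_subset_left hUsub Set.disjoint_sdiff_left
    have hsub2 : (⋃ y ∈ s, ball y (D / 2)) ∪ ball x₀ (ρ - D / 2) ⊆ ball x₀ (R + D / 2) := by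
      apply Set.union_subset
      · exact hUsub.trans Set.diff_subset
      · exact ball_subset_ball (by linarith)
    calc ((s.card : ℝ≥0∞) * ENNReal.ofReal ((D / 2) ^ d)
          + ENNReal.ofReal ((ρ - D / 2) ^ d)) * ν
        = volume (⋃ y ∈ s, ball y (D / 2)) + volume (ball x₀ (ρ - D / 2)) := by
          rw [hmeasU, hvol x₀ _ hρr]; ring
      _ = volume ((⋃ y ∈ s, ball y (D / 2)) ∪ ball x₀ (ρ - D / 2)) :=
          (measure_union hdisj2 measurableSet_ball).symm
      _ ≤ volume (ball x₀ (R + D / 2)) := measure_mono hsub2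
      _ = ENNReal.ofReal ((R + D / 2) ^ d) * ν := hvol x₀ _ hRr
  have hkey2 : (s.card : ℝ≥0∞) * ENNReal.ofReal ((D / 2) ^ d)
      + ENNReal.ofReal ((ρ - D / 2) ^ d) ≤ ENNReal.ofReal ((R + D / 2) ^ d) := by
    exact (ENNReal.mul_le_mul_iff_left hν0 hνt).mp hkey
  have hcast : ((s.card : ℝ≥0∞)) = ENNReal.ofReal (s.card : ℝ) := by
    simp [ENNReal.ofReal_natCast]
  rw [hcast, ← ENNReal.ofReal_mul (by positivity), ← ENNReal.ofReal_add (by positivity) (by positivity)] at hkey2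
  exact (ENNReal.ofReal_le_ofReal_iff (by positivity)).mp hkey2


/-- Remark 3.3(c): a hard core of diameter `D` together with an integrable
decreasing upper bound `ψ` on `g - 1` implies stability: there is a finite
`b ≥ 1` bounding `Π_{i=1}^n g(x₀ - x_i)` over all admissible configurations
(those whose all-pairs product is positive). -/
theorem hard_core_lower_regular_implies_stability
    {d : ℕ} (g : EuclideanSpace ℝ (Fin d) → ℝ) (hg0 : ∀ r, 0 ≤ g r)
    (D : ℝ) (hD : 0 < D) (hcore : ∀ r, ‖r‖ ≤ D → g r = 0)
    (ψ : ℝ → ℝ) (hψ0 : ∀ t, 0 ≤ ψ t) (hψmono : AntitoneOn ψ (Set.Ici D))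
    (hψg : ∀ r, D ≤ ‖r‖ → g r - 1 ≤ ψ ‖r‖)
    (hψsum : Summable (fun k : ℕ => ((k : ℝ) + 1) ^ (d - 1) * ψ (((k : ℝ) + 1) * D))) :
    ∃ b : ℝ, 1 ≤ b ∧
      ∀ (n : ℕ) (x₀ : EuclideanSpace ℝ (Fin d)) (x : Fin n → EuclideanSpace ℝ (Fin d)),
        0 < (∏ i, g (x₀ - x i)) * ∏ i, ∏ j ∈ Finset.Ioi i, g (x i - x j) →
        ∏ i, g (x₀ - x i) ≤ b := by
  classical
  set S : ℝ := ∑' k : ℕ, ((k : ℝ) + 1) ^ (d - 1) * ψ (((k : ℝ) + 1) * D) with hS_def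
  have hS0 : 0 ≤ S := tsum_nonneg fun k => mul_nonneg (by positivity) (hψ0 _)
  set C : ℝ := 4 * d * 5 ^ (d - 1) with hC_def
  have hC0 : 0 ≤ C := by positivity
  refine ⟨Real.exp (C * S), Real.one_le_exp (mul_nonneg hC0 hS0), ?_⟩
  intro n x₀ x hpos
  -- each factor is positive
  have hgx : ∀ i, 0 < g (x₀ - x i) := by
    intro i
    rcases (hg0 (x₀ - x i)).lt_or_eq with h | h
    · exact h
    · exfalso
      rw [Finset.prod_eq_zero (Finset.mem_univ i) h.symm, zero_mul] at hpos
      exact lt_irrefl 0 hpos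
  have hdx : ∀ i, D < ‖x₀ - x i‖ := by
    intro i
    by_contra h
    exact (hgx i).ne' (hcore _ (le_of_not_gt h))
  have hdxx : ∀ i j, i ≠ j → D < ‖x i - x j‖ := by
    have key : ∀ i j, i < j → D < ‖x i - x j‖ := by
      intro i j hij
      by_contra h
      have hz : g (x i - x j) = 0 := hcore _ (le_of_not_gt h)
      have : (∏ i, ∏ j ∈ Finset.Ioi i, g (x i - x j)) = 0 := by
        apply Finset.prod_eq_zero (Finset.mem_univ i)
        exact Finset.prod_eq_zero (Finset.mem_Ioi.mpr hij) hz
      rw [this, mul_zero] at hpos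
      exact lt_irrefl 0 hpos
    intro i j hij
    rcases lt_or_gt_of_ne hij with h | h
    · exact key i j h
    · rw [norm_sub_rev]; exact key j i h
  have hxinj : Function.Injective x := by
    intro i j h
    by_contra hne
    have := hdxx i j hne
    rw [h, sub_self, norm_zero] at this
    linarith
  -- dispatch the degenerate dimension-zero case
  rcases Nat.eq_zero_or_pos d with hd0 | hd
  · subst hd0
    match n with
    | 0 => simpa using Real.one_le_exp (mul_nonneg hC0 hS0)
    | (m + 1) =>
      exfalso
      have := hdx 0
      have hz : ‖x₀ - x 0‖ = 0 := by
        simp [EuclideanSpace.norm_eq]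
      linarith
  -- the annulus index of each point
  set κ : Fin n → ℕ := fun i => ⌊‖x₀ - x i‖ / D⌋₊ with hκ_def
  have hκ1 : ∀ i, 1 ≤ κ i := by
    intro i
    apply Nat.le_floor
    rw [Nat.cast_one, le_div_iff₀ hD, one_mul]
    exact (hdx i).le
  have hκlow : ∀ i, (κ i : ℝ) * D ≤ ‖x₀ - x i‖ := by
    intro i
    have := Nat.floor_le (by positivity : (0:ℝ) ≤ ‖x₀ - x i‖ / D)
    calc (κ i : ℝ) * D ≤ ‖x₀ - x i‖ / D * D := by
          exact mul_le_mul_of_nonneg_right this hD.le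
      _ = ‖x₀ - x i‖ := div_mul_cancel₀ _ hD.ne'
  have hκup : ∀ i, ‖x₀ - x i‖ < ((κ i : ℝ) + 1) * D := by
    intro i
    have := Nat.lt_floor_add_one (‖x₀ - x i‖ / D)
    calc ‖x₀ - x i‖ = ‖x₀ - x i‖ / D * D := (div_mul_cancel₀ _ hD.ne').symm
      _ < ((κ i : ℝ) + 1) * D := by
          exact mul_lt_mul_of_pos_right this hD
  -- the fiber counting bound
  have hfiber : ∀ k ∈ Finset.univ.image κ,
      ((Finset.univ.filter fun i => κ i = k).card : ℝ) ≤ C * (k : ℝ) ^ (d - 1) := by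
    intro k hk
    obtain ⟨i₀, _, hi₀⟩ := Finset.mem_image.mp hk
    have hk1 : 1 ≤ k := hi₀ ▸ hκ1 i₀
    have hk1' : (1:ℝ) ≤ (k:ℝ) := by exact_mod_cast hk1
    set F := Finset.univ.filter fun i => κ i = k with hF_def
    set s := F.image x with hs_def
    have hcard : s.card = F.card := Finset.card_image_of_injective F hxinj
    have hpack := packing_count D hD x₀ s ?_ ((k:ℝ) * D) (((k:ℝ) + 1) * D) ?_ ?_ ?_
    · -- conclude from packing
      have hDpos : (0:ℝ) < (D / 2) ^ d := by positivity
      have h1 : (s.card : ℝ) * (D / 2) ^ d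
          ≤ (((k:ℝ) + 1) * D + D / 2) ^ d - ((k:ℝ) * D - D / 2) ^ d := by linarith
      have e1 : ((k:ℝ) + 1) * D + D / 2 = (2 * k + 3) * (D / 2) := by ring
      have e2 : (k:ℝ) * D - D / 2 = (2 * k - 1) * (D / 2) := by ring
      rw [e1, e2, mul_pow, mul_pow] at h1
      have h2 : (s.card : ℝ) ≤ (2 * (k:ℝ) + 3) ^ d - (2 * (k:ℝ) - 1) ^ d := by
        nlinarith [pow_pos (by linarith : (0:ℝ) < D / 2) d]
      have h3 : (2 * (k:ℝ) + 3) ^ d - (2 * (k:ℝ) - 1) ^ d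
          ≤ d * 4 * (2 * (k:ℝ) + 3) ^ (d - 1) := by
        have := pow_sub_pow_le_aux (a := 2 * (k:ℝ) + 3) (b := 2 * (k:ℝ) - 1) d
          (by linarith) (by linarith)
        calc (2 * (k:ℝ) + 3) ^ d - (2 * (k:ℝ) - 1) ^ d
            ≤ d * ((2 * (k:ℝ) + 3) - (2 * (k:ℝ) - 1)) * (2 * (k:ℝ) + 3) ^ (d - 1) := this
          _ = d * 4 * (2 * (k:ℝ) + 3) ^ (d - 1) := by ring
      have h4 : (2 * (k:ℝ) + 3) ^ (d - 1) ≤ (5 * (k:ℝ)) ^ (d - 1) :=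
        pow_le_pow_left₀ (by linarith) (by linarith) _
      have h5 : (d : ℝ) * 4 * (5 * (k:ℝ)) ^ (d - 1) = C * (k : ℝ) ^ (d - 1) := by
        rw [hC_def, mul_pow]; ring
      calc (F.card : ℝ) = (s.card : ℝ) := by rw [hcard]
        _ ≤ (2 * (k:ℝ) + 3) ^ d - (2 * (k:ℝ) - 1) ^ d := h2
        _ ≤ (d:ℝ) * 4 * (2 * (k:ℝ) + 3) ^ (d - 1) := h3
        _ ≤ (d:ℝ) * 4 * (5 * (k:ℝ)) ^ (d - 1) := by
            have : (0:ℝ) ≤ (d:ℝ) * 4 := by positivity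
            exact mul_le_mul_of_nonneg_left h4 this
        _ = C * (k : ℝ) ^ (d - 1) := h5
    · -- pairwise distance
      intro y hy z hz hyz
      obtain ⟨i, hiF, rfl⟩ := Finset.mem_image.mp hy
      obtain ⟨j, hjF, rfl⟩ := Finset.mem_image.mp hz
      exact hdxx i j (fun h => hyz (by rw [h]))
    · -- D ≤ kD
      calc D = 1 * D := (one_mul D).symm
        _ ≤ (k:ℝ) * D := mul_le_mul_of_nonneg_right hk1' hD.le
    · -- kD ≤ (k+1)D
      nlinarith
    · -- membership
      intro y hy
      obtain ⟨i, hiF, rfl⟩ := Finset.mem_image.mp hy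
      have hκi : κ i = k := (Finset.mem_filter.mp hiF).2
      rw [norm_sub_rev]
      exact ⟨hκi ▸ hκlow i, hκi ▸ hκup i⟩
  -- the sum bound
  have hsum : ∑ i, ψ ‖x₀ - x i‖ ≤ C * S := by
    have step1 : ∑ i, ψ ‖x₀ - x i‖ ≤ ∑ i, ψ ((κ i : ℝ) * D) := by
      refine Finset.sum_le_sum fun i _ => ?_
      refine hψmono ?_ ?_ (hκlow i)
      · rw [Set.mem_Ici]
        calc D = 1 * D := (one_mul D).symm
          _ ≤ (κ i : ℝ) * D := by
              have : (1:ℝ) ≤ (κ i : ℝ) := by exact_mod_cast hκ1 i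
              exact mul_le_mul_of_nonneg_right this hD.le
      · exact Set.mem_Ici.mpr (hdx i).le
    have step2 : ∑ i, ψ ((κ i : ℝ) * D)
        = ∑ k ∈ Finset.univ.image κ,
            ((Finset.univ.filter fun i => κ i = k).card) • ψ ((k : ℝ) * D) :=
      Finset.sum_comp (fun k : ℕ => ψ ((k : ℝ) * D)) κ
    have step3 : ∑ k ∈ Finset.univ.image κ,
          ((Finset.univ.filter fun i => κ i = k).card) • ψ ((k : ℝ) * D)
        ≤ ∑ k ∈ Finset.univ.image κ, C * (k : ℝ) ^ (d - 1) * ψ ((k : ℝ) * D) := by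
      refine Finset.sum_le_sum fun k hk => ?_
      rw [nsmul_eq_mul]
      exact mul_le_mul_of_nonneg_right (hfiber k hk) (hψ0 _)
    have step4 : ∑ k ∈ Finset.univ.image κ, C * ((k : ℝ) ^ (d - 1) * ψ ((k : ℝ) * D))
        = C * ∑ k ∈ Finset.univ.image κ, (k : ℝ) ^ (d - 1) * ψ ((k : ℝ) * D) :=
      (Finset.mul_sum _ _ _).symm
    have step5 : ∑ k ∈ Finset.univ.image κ, (k : ℝ) ^ (d - 1) * ψ ((k : ℝ) * D) ≤ S := by
      set T := Finset.univ.image κ with hT_def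
      have hT1 : ∀ k ∈ T, 1 ≤ k := by
        intro k hk
        obtain ⟨i, _, hi⟩ := Finset.mem_image.mp hk
        exact hi ▸ hκ1 i
      have hinj : Set.InjOn (fun k : ℕ => k - 1) ↑T := by
        intro a ha b hb hab
        have ha1 := hT1 a ha
        have hb1 := hT1 b hb
        simp only at hab
        omega
      have key : ∑ k ∈ T, (k : ℝ) ^ (d - 1) * ψ ((k : ℝ) * D)
          = ∑ m ∈ T.image (fun k : ℕ => k - 1),
              ((m : ℝ) + 1) ^ (d - 1) * ψ (((m : ℝ) + 1) * D) := by
        rw [Finset.sum_image hinj]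
        refine Finset.sum_congr rfl fun k hk => ?_
        have hk1 := hT1 k hk
        have : ((k - 1 : ℕ) : ℝ) + 1 = (k : ℝ) := by
          have : ((k - 1 : ℕ) : ℝ) = (k : ℝ) - 1 := by
            rw [Nat.cast_sub hk1, Nat.cast_one]
          rw [this]; ring
        rw [this]
      rw [key, hS_def]
      exact Summable.sum_le_tsum _ (fun m _ => mul_nonneg (by positivity) (hψ0 _)) hψsum
    calc ∑ i, ψ ‖x₀ - x i‖ ≤ ∑ i, ψ ((κ i : ℝ) * D) := step1
      _ = _ := step2
      _ ≤ ∑ k ∈ Finset.univ.image κ, C * (k : ℝ) ^ (d - 1) * ψ ((k : ℝ) * D) := step3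
      _ = ∑ k ∈ Finset.univ.image κ, C * ((k : ℝ) ^ (d - 1) * ψ ((k : ℝ) * D)) := by
          refine Finset.sum_congr rfl fun k _ => by ring
      _ = C * ∑ k ∈ Finset.univ.image κ, (k : ℝ) ^ (d - 1) * ψ ((k : ℝ) * D) := step4
      _ ≤ C * S := mul_le_mul_of_nonneg_left step5 hC0
  -- the product bound
  calc ∏ i, g (x₀ - x i)
      ≤ ∏ i, (1 + ψ ‖x₀ - x i‖) := by
        refine Finset.prod_le_prod (fun i _ => hg0 _) fun i _ => ?_
        have := hψg (x₀ - x i) (hdx i).le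
        linarith
    _ ≤ ∏ i, Real.exp (ψ ‖x₀ - x i‖) := by
        refine Finset.prod_le_prod (fun i _ => by have := hψ0 ‖x₀ - x i‖; linarith) fun i _ => ?_
        have := Real.add_one_le_exp (ψ ‖x₀ - x i‖)
        linarith
    _ = Real.exp (∑ i, ψ ‖x₀ - x i‖) := by rw [Real.exp_sum]
    _ ≤ Real.exp (C * S) := Real.exp_le_exp.mpr hsum
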